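/- Let G be an abelian group and let A and B be finite subsets of G with |A| = |B| = n, 0 ∉ B, and n < p(G) (i.e., every nontrivial finite subgroup of G has cardinality greater than n). Then there exists a matching from A to B. -/
import Mathlib

open Finset AddMonoid
open scoped Pointwise


/-- Theorem: if `A, B ⊆ G` are finite with `|A| = |B| = n`, `0 ∉ B`, and every
nontrivial finite subgroup of `G` has more than `n` elements (i.e. `n < p(G)`),
then there is a matching from `A` to `B`, i.e. a bijection `f : A → B` with
`a + f a ∉ A` for all `a ∈ A`. -/
theorem matching_of_small {G : Type*} [AddCommGroup G]
    (A B : Finset G) (n : ℕ) (hA : A.card = n) (hB : B.card = n)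
    (h0 : (0 : G) ∉ B)
    (hp : ∀ H : AddSubgroup G, H ≠ ⊥ → (H : Set G).Finite → n < (H : Set G).ncard) :
    ∃ f : G → G, Set.BijOn f ↑A ↑B ∧ ∀ a ∈ A, a + f a ∉ A := by
  classical
  have hmin : ((n : ℕ∞) + 1) ≤ minOrder G := by
    rw [AddMonoid.le_minOrder_iff_forall_addSubgroup]
    intro H hH hHfin
    have := hp H hH hHfin
    rw [show Nat.card H = (H : Set G).ncard from by
      rw [← SetLike.coe_sort_coe, Nat.card_coe_set_eq]]
    exact_mod_cast Nat.succ_le_of_lt this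
  -- Hall setup
  set t : G → Finset G := fun a => B.filter (fun b => a + b ∉ A) with ht
  have hall : ∀ s : Finset {x // x ∈ A}, s.card ≤ (s.biUnion (fun a => t a.1)).card := by
    intro s
    by_contra hcon
    push_neg at hcon
    set N := s.biUnion (fun a => t a.1) with hN
    set S : Finset G := s.image Subtype.val with hS
    have hScard : S.card = s.card := Finset.card_image_of_injective _ Subtype.val_injective
    have hSsub : S ⊆ A := by
      intro x hx
      obtain ⟨a, _, rfl⟩ := Finset.mem_image.1 hx
      exact a.2
    set T : Finset G := insert 0 (B \ N) with hT
    have hNB : N ⊆ B := by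
      intro b hb
      obtain ⟨a, _, hb'⟩ := Finset.mem_biUnion.1 hb
      exact (Finset.mem_filter.1 hb').1
    have h0T : (0 : G) ∉ B \ N := fun h => h0 (Finset.mem_sdiff.1 h).1
    have hTcard : T.card = n - N.card + 1 := by
      rw [hT, Finset.card_insert_of_notMem h0T, Finset.card_sdiff_of_subset hNB, hB]
    -- S + T ⊆ A
    have hsub : S + T ⊆ A := by
      intro x hx
      obtain ⟨a, ha, b, hb, rfl⟩ := Finset.mem_add.1 hx
      rcases Finset.mem_insert.1 hb with rfl | hb
      · simpa using hSsub ha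
      · obtain ⟨a', ha', rfl⟩ := Finset.mem_image.1 ha
        have hbB := (Finset.mem_sdiff.1 hb).1
        have hbN := (Finset.mem_sdiff.1 hb).2
        by_contra hxA
        exact hbN (Finset.mem_biUnion.2 ⟨a', ha', Finset.mem_filter.2 ⟨hbB, hxA⟩⟩)
    have hSne : S.Nonempty := by
      rw [← Finset.card_pos, hScard]
      exact lt_of_le_of_lt (Nat.zero_le _) hcon
    have hTne : T.Nonempty := ⟨0, Finset.mem_insert_self _ _⟩
    have hCD := cauchy_davenport_minOrder_add hSne hTne
    have hSTle : (S + T).card ≤ n := hA ▸ Finset.card_le_card hsub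
    have hNle : N.card + 1 ≤ s.card := hcon
    have hsA : s.card ≤ n := by
      have : S.card ≤ A.card := Finset.card_le_card hSsub
      omega
    have hbig : n + 1 ≤ S.card + T.card - 1 := by
      have hNn : N.card ≤ n := by omega
      rw [hScard, hTcard]; omega
    -- derive contradiction
    rcases min_le_iff.1 hCD with h | h
    · have h2 : ((n : ℕ∞) + 1) ≤ ((S + T).card : ℕ∞) := hmin.trans h
      have h3 : (n + 1 : ℕ) ≤ (S + T).card := by exact_mod_cast h2
      omega
    · have h3 : S.card + T.card - 1 ≤ (S + T).card := by exact_mod_cast h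
      omega
  obtain ⟨f, hfinj, hf⟩ := (Finset.all_card_le_biUnion_card_iff_exists_injective
    (fun a : {x // x ∈ A} => t a.1)).1 hall
  set F : G → G := fun x => if h : x ∈ A then f ⟨x, h⟩ else 0 with hF
  have hFA : ∀ x (hx : x ∈ A), F x = f ⟨x, hx⟩ := fun x hx => dif_pos hx
  have hmaps : ∀ x ∈ A, F x ∈ B := by
    intro x hx
    rw [hFA x hx]
    exact (Finset.mem_filter.1 (hf ⟨x, hx⟩)).1
  have hinj : Set.InjOn F ↑A := by
    intro x hx y hy hxy
    rw [Finset.mem_coe] at hx hy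
    rw [hFA x hx, hFA y hy] at hxy
    exact congrArg Subtype.val (hfinj hxy)
  have himg : A.image F = B := by
    apply Finset.eq_of_subset_of_card_le
    · intro b hb
      obtain ⟨x, hx, rfl⟩ := Finset.mem_image.1 hb
      exact hmaps x hx
    · rw [hB, Finset.card_image_of_injOn (by simpa using hinj), hA]
  refine ⟨F, ⟨fun x hx => by simpa using hmaps x (by simpa using hx), hinj, ?_⟩, ?_⟩
  · intro b hb
    rw [← Finset.coe_image, himg] at *
    exact hb
  · intro a ha
    rw [hFA a ha]
    exact (Finset.mem_filter.1 (hf ⟨a, ha⟩)).2
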